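/- Let ϱ, a¹, a² : ℝ⁴ → ℝ be smooth. Then the Hamiltonian H₉ = Σ ε^{i₁i₂i₃i₄} ε^{j₁j₂j₃j₄} (∂_{i₁}ϱ)(∂_{i₂}ϱ)(∂_{i₃}∂_{j₁}a¹)(∂_{j₂}a¹)(∂_{i₄}∂_{j₃}a²)(∂_{j₄}a²), the sum taken over all i₁,…,i₄,j₁,…,j₄ ∈ {1,2,3,4}, vanishes identically on ℝ⁴: H₉ ≡ 0. Equivalently, the graph-to-multivector morphism φ sends the four-dimensional Nambu micro-graph encoded [1,2,3,5;3,4,5,6] to the zero function. -/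
import Mathlib


/-- The partial derivative `∂/∂xⁱ` of a function on `ℝ⁴ ≃ (Fin 4 → ℝ)`. -/
noncomputable def pd (i : Fin 4) (f : (Fin 4 → ℝ) → ℝ) : (Fin 4 → ℝ) → ℝ :=
  fun x => fderiv ℝ f x (Pi.single i 1)

/-- The totally antisymmetric four-index Levi-Civita symbol with `ε⁰¹²³ = 1`
(indices `1,…,4` of the paper are `0,…,3` here), via the Vandermonde formula. -/
noncomputable def eps (i j k l : Fin 4) : ℝ :=
  (((j : ℝ) - (i : ℝ)) * ((k : ℝ) - (i : ℝ)) * ((l : ℝ) - (i : ℝ)) *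
    ((k : ℝ) - (j : ℝ)) * ((l : ℝ) - (j : ℝ)) * ((l : ℝ) - (k : ℝ))) / 12

/-- `H₉ = φ([1,2,3,5;3,4,5,6])`, the Hamiltonian
`Σ ε^{i₁i₂i₃i₄} ε^{j₁j₂j₃j₄} (∂_{i₁}ϱ)(∂_{i₂}ϱ)(∂_{i₃}∂_{j₁}a¹)(∂_{j₂}a¹)(∂_{i₄}∂_{j₃}a²)(∂_{j₄}a²)`. -/
noncomputable def H₉ (ϱ a₁ a₂ : (Fin 4 → ℝ) → ℝ) (x : Fin 4 → ℝ) : ℝ :=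
  ∑ i₁ : Fin 4, ∑ i₂ : Fin 4, ∑ i₃ : Fin 4, ∑ i₄ : Fin 4,
    ∑ j₁ : Fin 4, ∑ j₂ : Fin 4, ∑ j₃ : Fin 4, ∑ j₄ : Fin 4,
      eps i₁ i₂ i₃ i₄ * eps j₁ j₂ j₃ j₄ *
        (pd i₁ ϱ x * pd i₂ ϱ x * pd i₃ (pd j₁ a₁) x * pd j₂ a₁ x *
          pd i₄ (pd j₃ a₂) x * pd j₄ a₂ x)

/-- Antisymmetry of `eps` in its first two slots. -/
lemma eps_swap₁₂ (a b c d : Fin 4) : eps b a c d = - eps a b c d := by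
  unfold eps; ring

/-- For all smooth `ϱ, a¹, a² : ℝ⁴ → ℝ`, the Hamiltonian `H₉` of the
four-dimensional Nambu micro-graph encoded `[1,2,3,5;3,4,5,6]` vanishes
identically on `ℝ⁴`: `φ` sends this graph to the zero function. -/
theorem H9_vanishes_4d
    (ϱ a₁ a₂ : (Fin 4 → ℝ) → ℝ)
    (hϱ : ContDiff ℝ (⊤ : ℕ∞) ϱ) (ha₁ : ContDiff ℝ (⊤ : ℕ∞) a₁)
    (ha₂ : ContDiff ℝ (⊤ : ℕ∞) a₂) :
    ∀ x : Fin 4 → ℝ, H₉ ϱ a₁ a₂ x = 0 := by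
  intro x
  have h : H₉ ϱ a₁ a₂ x + H₉ ϱ a₁ a₂ x = 0 := by
    unfold H₉
    nth_rewrite 1 [Finset.sum_comm]
    simp only [← Finset.sum_add_distrib]
    refine Finset.sum_eq_zero fun i₁ _ => Finset.sum_eq_zero fun i₂ _ =>
      Finset.sum_eq_zero fun i₃ _ => Finset.sum_eq_zero fun i₄ _ =>
      Finset.sum_eq_zero fun j₁ _ => Finset.sum_eq_zero fun j₂ _ =>
      Finset.sum_eq_zero fun j₃ _ => Finset.sum_eq_zero fun j₄ _ => ?_
    rw [eps_swap₁₂]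
    ring
  linarith
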